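/- For matrices $A, B$ in $M(m|n)$ (square matrices over $\mathbb{N}$ of size $m+n$), if $B \prec A$ in the order $\preceq$ (i.e. $B \preceq A$ and the restrictions to off-diagonal entries differ), then $\|B\| < \|A\|$, where $\|A\| = \sum_{1 \le i < j \le m+n} \frac{(j-i)(j-i+1)}{2}(a_{i,j} + a_{j,i})$. Consequently $B \preceq A$ implies $\|B\| \le \|A\|$. -/

import Mathlib

open Finset

/-- The relation `B ⪯ A` on `(m+n)×(m+n)` matrices over `ℕ` via corner sums. -/
def preceq (m n : ℕ) (B A : Matrix (Fin (m + n)) (Fin (m + n)) ℕ) : Prop :=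
  (∀ s t : Fin (m + n), s < t →
    ∑ i ∈ Finset.univ.filter (fun i => i ≤ s),
      ∑ j ∈ Finset.univ.filter (fun j => t ≤ j), B i j ≤
    ∑ i ∈ Finset.univ.filter (fun i => i ≤ s),
      ∑ j ∈ Finset.univ.filter (fun j => t ≤ j), A i j) ∧
  (∀ s t : Fin (m + n), t < s →
    ∑ i ∈ Finset.univ.filter (fun i => s ≤ i),
      ∑ j ∈ Finset.univ.filter (fun j => j ≤ t), B i j ≤
    ∑ i ∈ Finset.univ.filter (fun i => s ≤ i),
      ∑ j ∈ Finset.univ.filter (fun j => j ≤ t), A i j)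

/-- `B ≺ A`: `B ⪯ A` and some off-diagonal entry differs. -/
def preclt (m n : ℕ) (B A : Matrix (Fin (m + n)) (Fin (m + n)) ℕ) : Prop :=
  preceq m n B A ∧ ∃ i j : Fin (m + n), i ≠ j ∧ B i j ≠ A i j

/-- The weighted norm `‖A‖ = ∑_{i<j} (j-i)(j-i+1)/2 · (a_{i,j} + a_{j,i})`. -/
def mnorm (m n : ℕ) (A : Matrix (Fin (m + n)) (Fin (m + n)) ℕ) : ℕ :=
  ∑ p ∈ Finset.univ.filter (fun p : Fin (m + n) × Fin (m + n) => p.1 < p.2),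
    ((p.2 : ℕ) - (p.1 : ℕ)) * ((p.2 : ℕ) - (p.1 : ℕ) + 1) / 2 * (A p.1 p.2 + A p.2 p.1)

namespace NormAux

variable {N : ℕ}

/-- Upper-left corner sum (rows `≤ s`, columns `≥ t`). -/
def UL (A : Matrix (Fin N) (Fin N) ℕ) (s t : Fin N) : ℕ :=
  ∑ i ∈ Finset.univ.filter (fun i => i ≤ s),
    ∑ j ∈ Finset.univ.filter (fun j => t ≤ j), A i j

/-- Lower-right corner sum (rows `≥ s`, columns `≤ t`). -/
def LR (A : Matrix (Fin N) (Fin N) ℕ) (s t : Fin N) : ℕ :=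
  ∑ i ∈ Finset.univ.filter (fun i => s ≤ i),
    ∑ j ∈ Finset.univ.filter (fun j => j ≤ t), A i j

/-- `ℕ`-indexed upper-left corner sums. -/
def ee (A : Matrix (Fin N) (Fin N) ℕ) (s t : ℕ) : ℕ :=
  ∑ i ∈ Finset.univ.filter (fun i : Fin N => (i : ℕ) < s),
    ∑ j ∈ Finset.univ.filter (fun j : Fin N => t ≤ (j : ℕ)), A i j

def rrow (A : Matrix (Fin N) (Fin N) ℕ) (a : Fin N) (t : ℕ) : ℕ :=
  ∑ j ∈ Finset.univ.filter (fun j : Fin N => t ≤ (j : ℕ)), A a j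

/-- `ℕ`-indexed lower-right corner sums. -/
def ff (A : Matrix (Fin N) (Fin N) ℕ) (s t : ℕ) : ℕ :=
  ∑ i ∈ Finset.univ.filter (fun i : Fin N => s ≤ (i : ℕ)),
    ∑ j ∈ Finset.univ.filter (fun j : Fin N => (j : ℕ) < t), A i j

def ccol (A : Matrix (Fin N) (Fin N) ℕ) (s : ℕ) (b : Fin N) : ℕ :=
  ∑ i ∈ Finset.univ.filter (fun i : Fin N => s ≤ (i : ℕ)), A i b

lemma ee_zero (A : Matrix (Fin N) (Fin N) ℕ) (t : ℕ) : ee A 0 t = 0 := by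
  simp [ee]

lemma ee_top (A : Matrix (Fin N) (Fin N) ℕ) (s t : ℕ) (h : N ≤ t) : ee A s t = 0 := by
  unfold ee
  apply Finset.sum_eq_zero
  intro i _
  have : (Finset.univ.filter (fun j : Fin N => t ≤ (j : ℕ))) = ∅ := by
    ext j
    simp only [Finset.mem_filter, Finset.mem_univ, true_and, Finset.notMem_empty, iff_false]
    have := j.isLt; omega
  rw [this, Finset.sum_empty]

lemma ee_succ (A : Matrix (Fin N) (Fin N) ℕ) (a : Fin N) (t : ℕ) :
    ee A ((a : ℕ) + 1) t = ee A a t + rrow A a t := by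
  unfold ee rrow
  have h : (Finset.univ.filter (fun i : Fin N => (i : ℕ) < (a : ℕ) + 1))
      = insert a (Finset.univ.filter (fun i : Fin N => (i : ℕ) < (a : ℕ))) := by
    ext i
    simp only [Finset.mem_filter, Finset.mem_univ, true_and, Finset.mem_insert, Fin.ext_iff]
    omega
  rw [h, Finset.sum_insert (by simp)]
  omega

lemma rrow_succ (A : Matrix (Fin N) (Fin N) ℕ) (a b : Fin N) :
    rrow A a (b : ℕ) = A a b + rrow A a ((b : ℕ) + 1) := by
  unfold rrow
  have h : (Finset.univ.filter (fun j : Fin N => (b : ℕ) ≤ (j : ℕ)))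
      = insert b (Finset.univ.filter (fun j : Fin N => (b : ℕ) + 1 ≤ (j : ℕ))) := by
    ext j
    simp only [Finset.mem_filter, Finset.mem_univ, true_and, Finset.mem_insert, Fin.ext_iff]
    omega
  rw [h, Finset.sum_insert (by simp)]

lemma rect (A : Matrix (Fin N) (Fin N) ℕ) (i j : Fin N) :
    ee A ((i : ℕ) + 1) j + ee A i ((j : ℕ) + 1)
      = ee A i j + ee A ((i : ℕ) + 1) ((j : ℕ) + 1) + A i j := by
  rw [ee_succ, ee_succ, rrow_succ]
  omega

lemma ee_eq_UL (A : Matrix (Fin N) (Fin N) ℕ) (s t : ℕ) (hs : s < N) (ht : t < N) :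
    ee A (s + 1) t = UL A ⟨s, hs⟩ ⟨t, ht⟩ := by
  unfold ee UL
  have h1 : (Finset.univ.filter (fun i : Fin N => (i : ℕ) < s + 1))
      = Finset.univ.filter (fun i => i ≤ (⟨s, hs⟩ : Fin N)) := by
    ext i; simp [Fin.le_def]
  have h2 : (Finset.univ.filter (fun j : Fin N => t ≤ (j : ℕ)))
      = Finset.univ.filter (fun j => (⟨t, ht⟩ : Fin N) ≤ j) := by
    ext j; simp [Fin.le_def]
  rw [h1, h2]

lemma recoverUL (A B : Matrix (Fin N) (Fin N) ℕ)
    (h : ∀ s t : Fin N, s < t → UL B s t = UL A s t)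
    {i j : Fin N} (hij : i < j) : B i j = A i j := by
  have key : ∀ s t : ℕ, s ≤ t → ee B s t = ee A s t := by
    intro s t hst
    rcases Nat.eq_zero_or_pos s with hs | hs
    · subst hs; rw [ee_zero, ee_zero]
    by_cases hN : N ≤ t
    · rw [ee_top _ _ _ hN, ee_top _ _ _ hN]
    push_neg at hN
    obtain ⟨s', rfl⟩ : ∃ s', s = s' + 1 := ⟨s - 1, by omega⟩
    have hs' : s' < N := by omega
    rw [ee_eq_UL B s' t hs' hN, ee_eq_UL A s' t hs' hN]
    exact h _ _ (by rw [Fin.lt_def]; simpa using by omega)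
  have hij' : (i : ℕ) < (j : ℕ) := hij
  have h1 := key ((i : ℕ) + 1) (j : ℕ) (by omega)
  have h2 := key (i : ℕ) ((j : ℕ) + 1) (by omega)
  have h3 := key (i : ℕ) (j : ℕ) (by omega)
  have h4 := key ((i : ℕ) + 1) ((j : ℕ) + 1) (by omega)
  have rA := rect A i j
  have rB := rect B i j
  omega

lemma ff_zero (A : Matrix (Fin N) (Fin N) ℕ) (s : ℕ) : ff A s 0 = 0 := by
  simp [ff]

lemma ff_top (A : Matrix (Fin N) (Fin N) ℕ) (s t : ℕ) (h : N ≤ s) : ff A s t = 0 := by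
  unfold ff
  have : (Finset.univ.filter (fun i : Fin N => s ≤ (i : ℕ))) = ∅ := by
    ext i
    simp only [Finset.mem_filter, Finset.mem_univ, true_and, Finset.notMem_empty, iff_false]
    have := i.isLt; omega
  rw [this, Finset.sum_empty]

lemma ff_succ (A : Matrix (Fin N) (Fin N) ℕ) (s : ℕ) (b : Fin N) :
    ff A s ((b : ℕ) + 1) = ff A s b + ccol A s b := by
  unfold ff ccol
  rw [← Finset.sum_add_distrib]
  apply Finset.sum_congr rfl
  intro i _
  have h : (Finset.univ.filter (fun j : Fin N => (j : ℕ) < (b : ℕ) + 1))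
      = insert b (Finset.univ.filter (fun j : Fin N => (j : ℕ) < (b : ℕ))) := by
    ext j
    simp only [Finset.mem_filter, Finset.mem_univ, true_and, Finset.mem_insert, Fin.ext_iff]
    omega
  rw [h, Finset.sum_insert (by simp)]
  omega

lemma ccol_succ (A : Matrix (Fin N) (Fin N) ℕ) (a b : Fin N) :
    ccol A (a : ℕ) b = A a b + ccol A ((a : ℕ) + 1) b := by
  unfold ccol
  have h : (Finset.univ.filter (fun i : Fin N => (a : ℕ) ≤ (i : ℕ)))
      = insert a (Finset.univ.filter (fun i : Fin N => (a : ℕ) + 1 ≤ (i : ℕ))) := by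
    ext i
    simp only [Finset.mem_filter, Finset.mem_univ, true_and, Finset.mem_insert, Fin.ext_iff]
    omega
  rw [h, Finset.sum_insert (by simp)]

lemma rect' (A : Matrix (Fin N) (Fin N) ℕ) (i j : Fin N) :
    ff A i ((j : ℕ) + 1) + ff A ((i : ℕ) + 1) j
      = ff A i j + ff A ((i : ℕ) + 1) ((j : ℕ) + 1) + A i j := by
  rw [ff_succ, ff_succ, ccol_succ]
  omega

lemma ff_eq_LR (A : Matrix (Fin N) (Fin N) ℕ) (s t : ℕ) (hs : s < N) (ht : t < N) :
    ff A s (t + 1) = LR A ⟨s, hs⟩ ⟨t, ht⟩ := by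
  unfold ff LR
  have h1 : (Finset.univ.filter (fun i : Fin N => s ≤ (i : ℕ)))
      = Finset.univ.filter (fun i => (⟨s, hs⟩ : Fin N) ≤ i) := by
    ext i; simp [Fin.le_def]
  have h2 : (Finset.univ.filter (fun j : Fin N => (j : ℕ) < t + 1))
      = Finset.univ.filter (fun j => j ≤ (⟨t, ht⟩ : Fin N)) := by
    ext j; simp [Fin.le_def]
  rw [h1, h2]

lemma recoverLR (A B : Matrix (Fin N) (Fin N) ℕ)
    (h : ∀ s t : Fin N, t < s → LR B s t = LR A s t)
    {i j : Fin N} (hij : j < i) : B i j = A i j := by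
  have key : ∀ s t : ℕ, t ≤ s → ff B s t = ff A s t := by
    intro s t hst
    rcases Nat.eq_zero_or_pos t with ht | ht
    · subst ht; rw [ff_zero, ff_zero]
    by_cases hN : N ≤ s
    · rw [ff_top _ _ _ hN, ff_top _ _ _ hN]
    push_neg at hN
    obtain ⟨t', rfl⟩ : ∃ t', t = t' + 1 := ⟨t - 1, by omega⟩
    have ht' : t' < N := by omega
    rw [ff_eq_LR B s t' hN ht', ff_eq_LR A s t' hN ht']
    exact h _ _ (by rw [Fin.lt_def]; simpa using by omega)
  have hij' : (j : ℕ) < (i : ℕ) := hij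
  have h1 := key (i : ℕ) ((j : ℕ) + 1) (by omega)
  have h2 := key ((i : ℕ) + 1) (j : ℕ) (by omega)
  have h3 := key (i : ℕ) (j : ℕ) (by omega)
  have h4 := key ((i : ℕ) + 1) ((j : ℕ) + 1) (by omega)
  have rA := rect' A i j
  have rB := rect' B i j
  omega

/-- Generic double counting lemma. -/
lemma double_count {α β : Type*} [Fintype α] [Fintype β]
    (P : α → Prop) [DecidablePred P] (Q : α → β → Prop) [∀ a, DecidablePred (Q a)]
    (f : β → ℕ) :
    ∑ p ∈ Finset.univ.filter P, ∑ q ∈ Finset.univ.filter (Q p), f q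
      = ∑ q : β, (Finset.univ.filter (fun p => P p ∧ Q p q)).card * f q := by
  calc ∑ p ∈ Finset.univ.filter P, ∑ q ∈ Finset.univ.filter (Q p), f q
      = ∑ p : α, ∑ q : β, if P p ∧ Q p q then f q else 0 := by
        rw [Finset.sum_filter]
        apply Finset.sum_congr rfl
        intro p _
        by_cases hP : P p
        · simp only [hP, if_true, true_and, Finset.sum_filter]
        · simp [hP]
    _ = ∑ q : β, ∑ p : α, if P p ∧ Q p q then f q else 0 := Finset.sum_comm
    _ = ∑ q : β, (Finset.univ.filter (fun p => P p ∧ Q p q)).card * f q := by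
        apply Finset.sum_congr rfl
        intro q _
        rw [← Finset.sum_filter, Finset.sum_const, smul_eq_mul]

lemma UL_expand (A : Matrix (Fin N) (Fin N) ℕ) (s t : Fin N) :
    UL A s t = ∑ q ∈ Finset.univ.filter (fun q : Fin N × Fin N => q.1 ≤ s ∧ t ≤ q.2),
      A q.1 q.2 := by
  unfold UL
  rw [show (Finset.univ.filter (fun q : Fin N × Fin N => q.1 ≤ s ∧ t ≤ q.2))
      = (Finset.univ.filter (fun i : Fin N => i ≤ s)) ×ˢ
        (Finset.univ.filter (fun j : Fin N => t ≤ j)) from by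
    ext q; simp [Finset.mem_product]]
  rw [Finset.sum_product]

lemma LR_expand (A : Matrix (Fin N) (Fin N) ℕ) (s t : Fin N) :
    LR A s t = ∑ q ∈ Finset.univ.filter (fun q : Fin N × Fin N => s ≤ q.1 ∧ q.2 ≤ t),
      A q.1 q.2 := by
  unfold LR
  rw [show (Finset.univ.filter (fun q : Fin N × Fin N => s ≤ q.1 ∧ q.2 ≤ t))
      = (Finset.univ.filter (fun i : Fin N => s ≤ i)) ×ˢ
        (Finset.univ.filter (fun j : Fin N => j ≤ t)) from by
    ext q; simp [Finset.mem_product]]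
  rw [Finset.sum_product]

lemma gauss_aux (x y M : ℕ) (hx : x < M) (hy : y < M) :
    (∑ s ∈ Finset.range M, if x ≤ s then y - s else 0) = (y - x) * (y - x + 1) / 2 := by
  have h1 : (Finset.range M).filter (fun s => x ≤ s) = Finset.Ico x M := by
    ext s
    simp only [Finset.mem_filter, Finset.mem_range, Finset.mem_Ico]
    omega
  rw [← Finset.sum_filter, h1, Finset.sum_Ico_eq_sum_range]
  have h2 : ∀ k, y - (x + k) = (y - x) - k := fun k => by omega
  simp_rw [h2]
  have hdM : (y - x) + 1 ≤ M - x := by omega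
  rw [← Finset.sum_subset (Finset.range_subset_range.mpr hdM)
      (fun k _ hk => by simp only [Finset.mem_range] at hk; omega)]
  have h3 : (∑ k ∈ Finset.range ((y - x) + 1), ((y - x) - k))
      = ∑ k ∈ Finset.range ((y - x) + 1), k := by
    have := Finset.sum_range_reflect (fun k => k) ((y - x) + 1)
    simpa using this
  rw [h3, Finset.sum_range_id]
  simp [Nat.mul_comm]

lemma count_UL (a b : Fin N) :
    (Finset.univ.filter (fun p : Fin N × Fin N => p.1 < p.2 ∧ a ≤ p.1 ∧ p.2 ≤ b)).card
      = ((b : ℕ) - (a : ℕ)) * ((b : ℕ) - (a : ℕ) + 1) / 2 := by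
  rw [Finset.card_filter, Fintype.sum_prod_type]
  have step : ∀ s : Fin N,
      (∑ t : Fin N, if s < t ∧ a ≤ s ∧ t ≤ b then (1 : ℕ) else 0)
        = if (a : ℕ) ≤ (s : ℕ) then (b : ℕ) - (s : ℕ) else 0 := by
    intro s
    by_cases ha : a ≤ s
    · have ha' : (a : ℕ) ≤ (s : ℕ) := ha
      simp only [ha, true_and, ha', if_true]
      have : (∑ t : Fin N, if s < t ∧ t ≤ b then (1 : ℕ) else 0)
          = (Finset.univ.filter (fun t : Fin N => s < t ∧ t ≤ b)).card := by
        rw [Finset.card_filter]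
      rw [this]
      have : (Finset.univ.filter (fun t : Fin N => s < t ∧ t ≤ b)) = Finset.Ioc s b := by
        ext t; simp [Finset.mem_Ioc]
      rw [this, Fin.card_Ioc]
    · have ha' : ¬ (a : ℕ) ≤ (s : ℕ) := fun h => ha (Fin.le_def.mpr h)
      simp [ha, ha']
  rw [Finset.sum_congr rfl (fun s _ => step s)]
  rw [Fin.sum_univ_eq_sum_range (fun k => if (a : ℕ) ≤ k then (b : ℕ) - k else 0) N]
  exact gauss_aux (a : ℕ) (b : ℕ) N a.isLt b.isLt

lemma count_LR (a b : Fin N) :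
    (Finset.univ.filter (fun p : Fin N × Fin N => p.2 < p.1 ∧ p.1 ≤ a ∧ b ≤ p.2)).card
      = ((a : ℕ) - (b : ℕ)) * ((a : ℕ) - (b : ℕ) + 1) / 2 := by
  rw [← count_UL b a]
  apply Finset.card_nbij' Prod.swap Prod.swap
  · intro p hp
    simp only [Finset.mem_coe, Finset.mem_filter, Finset.mem_univ, true_and] at hp ⊢
    exact ⟨hp.1, hp.2.2, hp.2.1⟩
  · intro p hp
    simp only [Finset.mem_coe, Finset.mem_filter, Finset.mem_univ, true_and] at hp ⊢
    exact ⟨hp.1, hp.2.2, hp.2.1⟩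
  · intro p _; simp
  · intro p _; simp

lemma sumF1 (A : Matrix (Fin N) (Fin N) ℕ) :
    ∑ p ∈ Finset.univ.filter (fun p : Fin N × Fin N => p.1 < p.2), UL A p.1 p.2
      = ∑ q : Fin N × Fin N,
          ((q.2 : ℕ) - (q.1 : ℕ)) * ((q.2 : ℕ) - (q.1 : ℕ) + 1) / 2 * A q.1 q.2 := by
  calc ∑ p ∈ Finset.univ.filter (fun p : Fin N × Fin N => p.1 < p.2), UL A p.1 p.2
      = ∑ p ∈ Finset.univ.filter (fun p : Fin N × Fin N => p.1 < p.2),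
          ∑ q ∈ Finset.univ.filter (fun q : Fin N × Fin N => q.1 ≤ p.1 ∧ p.2 ≤ q.2),
            A q.1 q.2 := Finset.sum_congr rfl (fun p _ => UL_expand A p.1 p.2)
    _ = ∑ q : Fin N × Fin N,
          (Finset.univ.filter (fun p : Fin N × Fin N =>
            p.1 < p.2 ∧ q.1 ≤ p.1 ∧ p.2 ≤ q.2)).card * A q.1 q.2 :=
        double_count _ _ _
    _ = ∑ q : Fin N × Fin N,
          ((q.2 : ℕ) - (q.1 : ℕ)) * ((q.2 : ℕ) - (q.1 : ℕ) + 1) / 2 * A q.1 q.2 :=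
        Finset.sum_congr rfl (fun q _ => by rw [count_UL])

lemma sumF2 (A : Matrix (Fin N) (Fin N) ℕ) :
    ∑ p ∈ Finset.univ.filter (fun p : Fin N × Fin N => p.2 < p.1), LR A p.1 p.2
      = ∑ q : Fin N × Fin N,
          ((q.1 : ℕ) - (q.2 : ℕ)) * ((q.1 : ℕ) - (q.2 : ℕ) + 1) / 2 * A q.1 q.2 := by
  calc ∑ p ∈ Finset.univ.filter (fun p : Fin N × Fin N => p.2 < p.1), LR A p.1 p.2
      = ∑ p ∈ Finset.univ.filter (fun p : Fin N × Fin N => p.2 < p.1),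
          ∑ q ∈ Finset.univ.filter (fun q : Fin N × Fin N => p.1 ≤ q.1 ∧ q.2 ≤ p.2),
            A q.1 q.2 := Finset.sum_congr rfl (fun p _ => LR_expand A p.1 p.2)
    _ = ∑ q : Fin N × Fin N,
          (Finset.univ.filter (fun p : Fin N × Fin N =>
            p.2 < p.1 ∧ p.1 ≤ q.1 ∧ q.2 ≤ p.2)).card * A q.1 q.2 :=
        double_count _ _ _
    _ = ∑ q : Fin N × Fin N,
          ((q.1 : ℕ) - (q.2 : ℕ)) * ((q.1 : ℕ) - (q.2 : ℕ) + 1) / 2 * A q.1 q.2 :=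
        Finset.sum_congr rfl (fun q _ => by rw [count_LR])

lemma decomp (A : Matrix (Fin N) (Fin N) ℕ) :
    (∑ p ∈ Finset.univ.filter (fun p : Fin N × Fin N => p.1 < p.2),
      ((p.2 : ℕ) - (p.1 : ℕ)) * ((p.2 : ℕ) - (p.1 : ℕ) + 1) / 2 * (A p.1 p.2 + A p.2 p.1))
    = (∑ p ∈ Finset.univ.filter (fun p : Fin N × Fin N => p.1 < p.2), UL A p.1 p.2)
      + (∑ p ∈ Finset.univ.filter (fun p : Fin N × Fin N => p.2 < p.1), LR A p.1 p.2) := by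
  rw [sumF1, sumF2]
  have lhs : (∑ p ∈ Finset.univ.filter (fun p : Fin N × Fin N => p.1 < p.2),
        ((p.2 : ℕ) - (p.1 : ℕ)) * ((p.2 : ℕ) - (p.1 : ℕ) + 1) / 2 * (A p.1 p.2 + A p.2 p.1))
      = (∑ p ∈ Finset.univ.filter (fun p : Fin N × Fin N => p.1 < p.2),
          ((p.2 : ℕ) - (p.1 : ℕ)) * ((p.2 : ℕ) - (p.1 : ℕ) + 1) / 2 * A p.1 p.2)
        + (∑ p ∈ Finset.univ.filter (fun p : Fin N × Fin N => p.1 < p.2),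
          ((p.2 : ℕ) - (p.1 : ℕ)) * ((p.2 : ℕ) - (p.1 : ℕ) + 1) / 2 * A p.2 p.1) := by
    rw [← Finset.sum_add_distrib]
    exact Finset.sum_congr rfl (fun p _ => by ring)
  rw [lhs]
  congr 1
  · -- first piece: extend filter to univ
    apply Finset.sum_subset (Finset.subset_univ _)
    intro q _ hq
    simp only [Finset.mem_filter, Finset.mem_univ, true_and, not_lt] at hq
    have : (q.2 : ℕ) - (q.1 : ℕ) = 0 := by
      have : (q.2 : ℕ) ≤ (q.1 : ℕ) := hq
      omega
    rw [this]
    simp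
  · -- second piece: swap then extend
    have swp : (∑ p ∈ Finset.univ.filter (fun p : Fin N × Fin N => p.1 < p.2),
          ((p.2 : ℕ) - (p.1 : ℕ)) * ((p.2 : ℕ) - (p.1 : ℕ) + 1) / 2 * A p.2 p.1)
        = ∑ p ∈ Finset.univ.filter (fun p : Fin N × Fin N => p.2 < p.1),
          ((p.1 : ℕ) - (p.2 : ℕ)) * ((p.1 : ℕ) - (p.2 : ℕ) + 1) / 2 * A p.1 p.2 := by
      apply Finset.sum_nbij' Prod.swap Prod.swap
      · intro p hp; simp only [Finset.mem_filter, Finset.mem_univ, true_and] at hp ⊢; exact hp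
      · intro p hp; simp only [Finset.mem_filter, Finset.mem_univ, true_and] at hp ⊢; exact hp
      · intro p _; simp
      · intro p _; simp
      · intro p _; rfl
    rw [swp]
    apply Finset.sum_subset (Finset.subset_univ _)
    intro q _ hq
    simp only [Finset.mem_filter, Finset.mem_univ, true_and, not_lt] at hq
    have : (q.1 : ℕ) - (q.2 : ℕ) = 0 := by
      have : (q.1 : ℕ) ≤ (q.2 : ℕ) := hq
      omega
    rw [this]
    simp

end NormAux

open NormAux in
/-- `B ≺ A` implies `‖B‖ < ‖A‖`; consequently `B ⪯ A` implies
`‖B‖ ≤ ‖A‖`. -/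
theorem norm_strict_mono (m n : ℕ) :
    (∀ A B : Matrix (Fin (m + n)) (Fin (m + n)) ℕ,
      preclt m n B A → mnorm m n B < mnorm m n A) ∧
    (∀ A B : Matrix (Fin (m + n)) (Fin (m + n)) ℕ,
      preceq m n B A → mnorm m n B ≤ mnorm m n A) := by
  have hd : ∀ X : Matrix (Fin (m + n)) (Fin (m + n)) ℕ,
      mnorm m n X
        = (∑ p ∈ Finset.univ.filter (fun p : Fin (m + n) × Fin (m + n) => p.1 < p.2),
            UL X p.1 p.2)
          + (∑ p ∈ Finset.univ.filter (fun p : Fin (m + n) × Fin (m + n) => p.2 < p.1),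
            LR X p.1 p.2) := fun X => decomp X
  constructor
  · intro A B hlt
    obtain ⟨hle, i, j, hij, hne⟩ := hlt
    have hle1 : ∀ p ∈ Finset.univ.filter (fun p : Fin (m + n) × Fin (m + n) => p.1 < p.2),
        UL B p.1 p.2 ≤ UL A p.1 p.2 := fun p hp =>
      hle.1 p.1 p.2 (Finset.mem_filter.mp hp).2
    have hle2 : ∀ p ∈ Finset.univ.filter (fun p : Fin (m + n) × Fin (m + n) => p.2 < p.1),
        LR B p.1 p.2 ≤ LR A p.1 p.2 := fun p hp =>
      hle.2 p.1 p.2 (Finset.mem_filter.mp hp).2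
    rw [hd A, hd B]
    rcases lt_or_gt_of_ne hij with hlt' | hlt'
    · -- i < j : strictness in the UL part
      have hstrict : ∃ p ∈ Finset.univ.filter
          (fun p : Fin (m + n) × Fin (m + n) => p.1 < p.2),
          UL B p.1 p.2 < UL A p.1 p.2 := by
        by_contra hc
        push_neg at hc
        have heq : ∀ s t : Fin (m + n), s < t → UL B s t = UL A s t := by
          intro s t hst
          exact le_antisymm (hle.1 s t hst)
            (hc (s, t) (by simp [hst]))
        exact hne (recoverUL A B heq hlt')
      exact add_lt_add_of_lt_of_le (Finset.sum_lt_sum hle1 hstrict)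
        (Finset.sum_le_sum hle2)
    · -- j < i : strictness in the LR part
      have hstrict : ∃ p ∈ Finset.univ.filter
          (fun p : Fin (m + n) × Fin (m + n) => p.2 < p.1),
          LR B p.1 p.2 < LR A p.1 p.2 := by
        by_contra hc
        push_neg at hc
        have heq : ∀ s t : Fin (m + n), t < s → LR B s t = LR A s t := by
          intro s t hst
          exact le_antisymm (hle.2 s t hst)
            (hc (s, t) (by simp [hst]))
        exact hne (recoverLR A B heq hlt')
      exact add_lt_add_of_le_of_lt (Finset.sum_le_sum hle1)
        (Finset.sum_lt_sum hle2 hstrict)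
  · intro A B hle
    rw [hd A, hd B]
    exact add_le_add
      (Finset.sum_le_sum (fun p hp => hle.1 p.1 p.2 (Finset.mem_filter.mp hp).2))
      (Finset.sum_le_sum (fun p hp => hle.2 p.1 p.2 (Finset.mem_filter.mp hp).2))
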